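/- Let d ≥ 1 and α ≤ β ≤ γ with α + β < 0. Then the product estimate ‖fg‖_{H^{-γ}(𝕋^d)} ≤ C‖f‖_{H^α}‖g‖_{H^β} fails: there is no constant C making it hold for all mean-zero f, g. (A counterexample is given by f̂ = χ_{{Ne₁}}, ĝ = χ_{{(−N−1)e₁}} with N → ∞.) -/
import Mathlib


/-- Sobolev weight (1 + |n|²) of a frequency n ∈ ℤ^d. -/
noncomputable def wt (d : ℕ) (n : Fin d → ℤ) : ℝ := 1 + ∑ i, ((n i : ℝ)) ^ 2

/-- The H^s norm of a function on 𝕋^d via its Fourier coefficients. -/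
noncomputable def sobNorm (d : ℕ) (s : ℝ) (a : (Fin d → ℤ) → ℂ) : ℝ :=
  Real.sqrt (∑' n : Fin d → ℤ, wt d n ^ s * ‖a n‖ ^ 2)

/-- Convolution of Fourier coefficients (Fourier coefficients of the product fg). -/
noncomputable def conv (d : ℕ) (a b : (Fin d → ℤ) → ℂ) : (Fin d → ℤ) → ℂ :=
  fun n => ∑' k : Fin d → ℤ, a k * b (n - k)

/-- A frequency supported at a single coordinate. -/
def pt (d : ℕ) (i0 : Fin d) (m : ℤ) : Fin d → ℤ := fun i => if i = i0 then m else 0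

lemma wt_pt (d : ℕ) (i0 : Fin d) (m : ℤ) : wt d (pt d i0 m) = 1 + (m : ℝ) ^ 2 := by
  unfold wt pt
  congr 1
  rw [Finset.sum_eq_single i0]
  · simp
  · intro i _ hi; simp [hi]
  · intro h; exact absurd (Finset.mem_univ i0) h

lemma pt_add (d : ℕ) (i0 : Fin d) (m m' : ℤ) :
    pt d i0 m + pt d i0 m' = pt d i0 (m + m') := by
  funext i
  by_cases h : i = i0 <;> simp [pt, h]

lemma pt_ne_zero (d : ℕ) (i0 : Fin d) (m : ℤ) (hm : m ≠ 0) : (0 : Fin d → ℤ) ≠ pt d i0 m := by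
  intro h
  have := congrFun h i0
  simp [pt] at this
  exact hm this.symm

lemma sobNorm_single (d : ℕ) (s : ℝ) (p : Fin d → ℤ) :
    sobNorm d s (fun n => if n = p then (1:ℂ) else 0) = Real.sqrt (wt d p ^ s) := by
  unfold sobNorm
  rw [tsum_eq_single p]
  · simp
  · intro n hn; simp [hn]

lemma conv_single (d : ℕ) (p q : Fin d → ℤ) :
    conv d (fun n => if n = p then (1:ℂ) else 0) (fun n => if n = q then (1:ℂ) else 0)
      = fun n => if n = p + q then (1:ℂ) else 0 := by
  funext n
  unfold conv
  rw [tsum_eq_single p]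
  · simp only [if_pos rfl, one_mul]
    by_cases h : n = p + q
    · have h2 : n - p = q := by rw [h]; ring
      simp [h, h2]
    · have h2 : n - p ≠ q := fun hc => h ((eq_add_of_sub_eq hc).trans (add_comm q p))
      simp [h, h2]
  · intro k hk; simp [hk]

lemma support_single_finite (d : ℕ) (p : Fin d → ℤ) :
    (Function.support (fun n => if n = p then (1:ℂ) else 0)).Finite := by
  apply Set.Finite.subset (Set.finite_singleton p)
  intro x hx
  by_contra h
  simp only [Set.mem_singleton_iff] at h
  exact hx (if_neg h)

/-- Failure of the product estimate ‖fg‖_{H^{-γ}} ≤ C‖f‖_{H^α}‖g‖_{H^β} on 𝕋^d when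
α ≤ β ≤ γ and α + β < 0: no constant C works, even for finitely supported mean-zero
Fourier coefficients. -/
theorem product_estimate_fails (d : ℕ) (hd : 1 ≤ d) (α β γ : ℝ)
    (hab : α ≤ β) (hbc : β ≤ γ) (hneg : α + β < 0) :
    ¬ ∃ C : ℝ, ∀ a b : (Fin d → ℤ) → ℂ,
      (Function.support a).Finite → (Function.support b).Finite →
      a 0 = 0 → b 0 = 0 →
      sobNorm d (-γ) (conv d a b) ≤ C * sobNorm d α a * sobNorm d β b := by
  rintro ⟨C, hC⟩
  have i0 : Fin d := ⟨0, hd⟩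
  have hα : α < 0 := by linarith
  -- the key inequality for each N ≥ 1
  have key : ∀ N : ℕ, 1 ≤ N →
      Real.sqrt ((2:ℝ) ^ (-γ)) ≤ C * Real.sqrt ((1 + (N:ℝ)^2) ^ α) *
        Real.sqrt ((1 + ((N:ℝ)+1)^2) ^ β) := by
    intro N hN
    have hN0 : ((N:ℤ)) ≠ 0 := by exact_mod_cast Nat.one_le_iff_ne_zero.mp hN
    have h := hC (fun n => if n = pt d i0 (N:ℤ) then 1 else 0)
      (fun n => if n = pt d i0 (-((N:ℤ)+1)) then 1 else 0)
      (support_single_finite d _) (support_single_finite d _)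
      (if_neg (pt_ne_zero d i0 _ hN0))
      (if_neg (pt_ne_zero d i0 _ (by omega)))
    rw [conv_single, sobNorm_single, sobNorm_single, sobNorm_single, pt_add,
      wt_pt, wt_pt, wt_pt] at h
    have e1 : ((N:ℤ) + -((N:ℤ)+1)) = (-1 : ℤ) := by ring
    rw [e1] at h
    push_cast at h
    norm_num at h
    convert h using 4 <;> ring
  have hL : 0 < Real.sqrt ((2:ℝ) ^ (-γ)) :=
    Real.sqrt_pos.2 (Real.rpow_pos_of_pos two_pos _)
  have hC0 : 0 < C := by
    by_contra hc
    push_neg at hc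
    have h1 := key 1 le_rfl
    have hxy : 0 ≤ Real.sqrt ((1 + ((1:ℕ):ℝ)^2) ^ α) * Real.sqrt ((1 + (((1:ℕ):ℝ)+1)^2) ^ β) :=
      mul_nonneg (Real.sqrt_nonneg _) (Real.sqrt_nonneg _)
    have hle : C * Real.sqrt ((1 + ((1:ℕ):ℝ)^2) ^ α) * Real.sqrt ((1 + (((1:ℕ):ℝ)+1)^2) ^ β) ≤ 0 := by
      rw [mul_assoc]
      exact mul_nonpos_iff.2 (Or.inr ⟨hc, hxy⟩)
    linarith
  set K : ℝ := max 1 ((9:ℝ) ^ (β/2)) with hK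
  have hK1 : (1:ℝ) ≤ K := le_max_left _ _
  have hK0 : 0 < K := lt_of_lt_of_le one_pos hK1
  -- the bound in rpow form
  have hbound : ∀ N : ℕ, 1 ≤ N →
      Real.sqrt ((2:ℝ) ^ (-γ)) ≤ C * K * (N:ℝ) ^ (α + β) := by
    intro N hN
    have hN1 : (1:ℝ) ≤ (N:ℝ) := by exact_mod_cast hN
    have hNpos : (0:ℝ) < (N:ℝ) := lt_of_lt_of_le one_pos hN1
    have hx : (0:ℝ) < 1 + (N:ℝ)^2 := by positivity
    have hy : (0:ℝ) < 1 + ((N:ℝ)+1)^2 := by positivity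
    have h := key N hN
    -- convert the sqrts to rpow with exponent halved
    have sq1 : Real.sqrt ((1 + (N:ℝ)^2) ^ α) = (1 + (N:ℝ)^2) ^ (α/2) := by
      rw [Real.sqrt_eq_rpow, ← Real.rpow_mul hx.le]; congr 1; ring
    have sq2 : Real.sqrt ((1 + ((N:ℝ)+1)^2) ^ β) = (1 + ((N:ℝ)+1)^2) ^ (β/2) := by
      rw [Real.sqrt_eq_rpow, ← Real.rpow_mul hy.le]; congr 1; ring
    rw [sq1, sq2] at h
    have hNsq : ((N:ℝ)^2) ^ (α/2) = (N:ℝ)^α := by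
      rw [← Real.rpow_natCast (N:ℝ) 2, ← Real.rpow_mul hNpos.le]; congr 1; push_cast; ring
    have hNsqβ : ((N:ℝ)^2) ^ (β/2) = (N:ℝ)^β := by
      rw [← Real.rpow_natCast (N:ℝ) 2, ← Real.rpow_mul hNpos.le]; congr 1; push_cast; ring
    have ha : (1 + (N:ℝ)^2) ^ (α/2) ≤ (N:ℝ)^α := by
      rw [← hNsq]
      exact Real.rpow_le_rpow_of_nonpos (by positivity) (by nlinarith) (by linarith)
    have hb : (1 + ((N:ℝ)+1)^2) ^ (β/2) ≤ K * (N:ℝ)^β := by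
      rcases le_or_gt β 0 with hβ | hβ
      · have h1 : (1 + ((N:ℝ)+1)^2) ^ (β/2) ≤ (N:ℝ)^β := by
          rw [← hNsqβ]
          exact Real.rpow_le_rpow_of_nonpos (by positivity) (by nlinarith) (by linarith)
        calc (1 + ((N:ℝ)+1)^2) ^ (β/2) ≤ (N:ℝ)^β := h1
          _ = 1 * (N:ℝ)^β := (one_mul _).symm
          _ ≤ K * (N:ℝ)^β :=
              mul_le_mul_of_nonneg_right hK1 (Real.rpow_pos_of_pos hNpos β).le
      · have h9 : 1 + ((N:ℝ)+1)^2 ≤ 9 * (N:ℝ)^2 := by nlinarith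
        calc (1 + ((N:ℝ)+1)^2) ^ (β/2) ≤ (9 * (N:ℝ)^2) ^ (β/2) :=
              Real.rpow_le_rpow hy.le h9 (by linarith)
          _ = (9:ℝ)^(β/2) * ((N:ℝ)^2)^(β/2) := Real.mul_rpow (by norm_num) (by positivity)
          _ = (9:ℝ)^(β/2) * (N:ℝ)^β := by rw [hNsqβ]
          _ ≤ K * (N:ℝ)^β :=
              mul_le_mul_of_nonneg_right (le_max_right _ _) (Real.rpow_pos_of_pos hNpos β).le
    calc Real.sqrt ((2:ℝ) ^ (-γ))
        ≤ C * (1 + (N:ℝ)^2) ^ (α/2) * (1 + ((N:ℝ)+1)^2) ^ (β/2) := h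
      _ ≤ C * ((N:ℝ)^α) * (K * (N:ℝ)^β) :=
          mul_le_mul (mul_le_mul_of_nonneg_left ha hC0.le) hb
            (Real.rpow_pos_of_pos hy _).le (by positivity)
      _ = C * K * (N:ℝ) ^ (α + β) := by
          rw [Real.rpow_add hNpos]; ring
  -- N^(α+β) → 0, contradiction
  have ht : Filter.Tendsto (fun N : ℕ => C * K * (N:ℝ) ^ (α + β)) Filter.atTop (nhds 0) := by
    have h1 : Filter.Tendsto (fun x : ℝ => x ^ (α + β)) Filter.atTop (nhds 0) := by
      have := tendsto_rpow_neg_atTop (show 0 < -(α + β) by linarith)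
      simpa using this
    have h2 := h1.comp tendsto_natCast_atTop_atTop
    have h3 := h2.const_mul (C * K)
    simpa using h3
  have hev := ht.eventually_lt_const hL
  obtain ⟨N, hN1, hN2⟩ := ((Filter.eventually_ge_atTop 1).and hev).exists
  exact absurd (hbound N hN1) (not_le.mpr hN2)
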